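/- arXiv:2201.06438 — 2 statements merged into one kernel-verified Lean document; each statement's English description precedes it below -/
import Mathlib

section
/- Let Θ₁ and Θ₂ be symmetric n×n Toeplitz matrices each of whose diagonal values form a monotone sequence (the entry on the k-th principal diagonal is θ_k^{(i)} with θ_1^{(i)} ≥ θ_2^{(i)} ≥ ... ≥ θ_{n-1}^{(i)}). Then for any permutation matrices Π₁, Π₂, the Frobenius distance satisfies ‖Θ₁ − Θ₂‖_F ≤ ‖Π₁ Θ₁ Π₁ᵀ − Π₂ Θ₂ Π₂ᵀ‖_F. -/
/-- Symmetric Toeplitz matrix with diagonal values `θ |i-j|`. -/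
noncomputable def toep (n : ℕ) (θ : ℕ → ℝ) : Matrix (Fin n) (Fin n) ℝ :=
  fun i j => θ (((i : ℤ) - (j : ℤ)).natAbs)

/-- Frobenius norm of a real matrix. -/
noncomputable def frob {n : ℕ} (A : Matrix (Fin n) (Fin n) ℝ) : ℝ :=
  Real.sqrt (∑ i, ∑ j, (A i j) ^ 2)

namespace Stmt4Aux

variable {n : ℕ}

/-- distance of a pair -/
def d (p : Fin n × Fin n) : ℕ := (((p.1 : ℤ)) - ((p.2 : ℤ))).natAbs

lemma d_pos {p : Fin n × Fin n} (h : p.1 ≠ p.2) : 1 ≤ d p := by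
  have h1 := p.1.isLt
  have h2 := p.2.isLt
  have hne : (p.1 : ℕ) ≠ (p.2 : ℕ) := fun hc => h (Fin.ext hc)
  unfold d
  omega

lemma d_le {p : Fin n × Fin n} : d p ≤ n - 1 := by
  have h1 := p.1.isLt
  have h2 := p.2.isLt
  unfold d
  omega

lemma antitone_of_step {θ : ℕ → ℝ}
    (h : ∀ k, 1 ≤ k → k + 1 ≤ n - 1 → θ (k + 1) ≤ θ k) :
    ∀ a b, 1 ≤ a → a ≤ b → b ≤ n - 1 → θ b ≤ θ a := by
  intro a b ha hab hb
  induction b with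
  | zero => omega
  | succ m ih =>
    rcases Nat.eq_or_lt_of_le hab with h1 | h1
    · rw [h1]
    · have hm : a ≤ m := by omega
      have h2 : θ (m + 1) ≤ θ m := h m (by omega) hb
      exact h2.trans (ih hm (by omega))

end Stmt4Aux

open Stmt4Aux in
/-- For symmetric monotone Toeplitz matrices `Θ₁, Θ₂` and any permutations `π₁, π₂`,
`‖Θ₁ − Θ₂‖_F ≤ ‖Π₁ Θ₁ Π₁ᵀ − Π₂ Θ₂ Π₂ᵀ‖_F`. -/
theorem stmt4 (n : ℕ) (θ₁ θ₂ : ℕ → ℝ)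
    (h1 : ∀ k, 1 ≤ k → k + 1 ≤ n - 1 → θ₁ (k + 1) ≤ θ₁ k)
    (h2 : ∀ k, 1 ≤ k → k + 1 ≤ n - 1 → θ₂ (k + 1) ≤ θ₂ k)
    (π₁ π₂ : Equiv.Perm (Fin n)) :
    frob (toep n θ₁ - toep n θ₂) ≤
      frob ((toep n θ₁).submatrix π₁ π₁ - (toep n θ₂).submatrix π₂ π₂) := by
  classical
  set σ : Equiv.Perm (Fin n) := π₁.symm.trans π₂ with hσ
  set τ : Equiv.Perm (Fin n × Fin n) := σ.prodCongr σ with hτ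
  set f : Fin n × Fin n → ℝ := fun p => θ₁ (d p) with hf
  set g : Fin n × Fin n → ℝ := fun p => θ₂ (d p) with hg
  have ant1 := antitone_of_step (n := n) h1
  have ant2 := antitone_of_step (n := n) h2
  -- key rearrangement inequality
  have key : ∑ p : Fin n × Fin n, f p * g (τ p) ≤ ∑ p : Fin n × Fin n, f p * g p := by
    have hdiag : ∀ p : Fin n × Fin n, p.1 = p.2 → f p * g (τ p) = f p * g p := by
      intro p hp
      have h1 : d p = 0 := by simp [d, hp]
      have h2 : d (τ p) = 0 := by
        simp [d, hτ, Equiv.prodCongr_apply, hp]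
      simp [hf, hg, h1, h2]
    -- split into diagonal and off-diagonal
    rw [← Finset.sum_filter_add_sum_filter_not Finset.univ (fun p : Fin n × Fin n => p.1 = p.2)
        (fun p => f p * g (τ p)),
      ← Finset.sum_filter_add_sum_filter_not Finset.univ (fun p : Fin n × Fin n => p.1 = p.2)
        (fun p => f p * g p)]
    have hdeq : ∑ p ∈ Finset.univ.filter (fun p : Fin n × Fin n => p.1 = p.2), f p * g (τ p)
        = ∑ p ∈ Finset.univ.filter (fun p : Fin n × Fin n => p.1 = p.2), f p * g p := by
      apply Finset.sum_congr rfl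
      intro p hp
      exact hdiag p (by simpa using hp)
    rw [hdeq]
    apply add_le_add_right
    -- off-diagonal part via the subtype
    have hpred : ∀ p : Fin n × Fin n, ¬ p.1 = p.2 ↔ ¬ (τ p).1 = (τ p).2 := by
      intro p
      constructor
      · intro h hc
        exact h (σ.injective (by simpa [hτ] using hc))
      · intro h hc
        exact h (by simp [hτ, hc])
    set τ' : Equiv.Perm {p : Fin n × Fin n // ¬ p.1 = p.2} := τ.subtypePerm (fun p => (hpred p).symm) with hτ'
    have mono : Monovary (fun x : {p : Fin n × Fin n // ¬ p.1 = p.2} => f x.val)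
        (fun x : {p : Fin n × Fin n // ¬ p.1 = p.2} => g x.val) := by
      intro i j hij
      simp only [hf, hg] at hij ⊢
      by_cases hle : d i.val ≤ d j.val
      · exact absurd (ant2 _ _ (d_pos i.prop) hle d_le) (not_le.mpr hij)
      · exact ant1 _ _ (d_pos j.prop) (le_of_not_ge hle) d_le
    have := mono.sum_mul_comp_perm_le_sum_mul (σ := τ')
    have hsub : ∀ (F : Fin n × Fin n → ℝ),
        ∑ p ∈ Finset.univ.filter (fun p : Fin n × Fin n => ¬ p.1 = p.2), F p
          = ∑ x : {p : Fin n × Fin n // ¬ p.1 = p.2}, F x.val := by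
      intro F
      rw [← Finset.sum_subtype (Finset.univ.filter (fun p : Fin n × Fin n => ¬ p.1 = p.2))
        (p := fun p : Fin n × Fin n => ¬ p.1 = p.2) (by simp) F]
    rw [hsub, hsub]
    have hcomp : ∀ x : {p : Fin n × Fin n // ¬ p.1 = p.2}, g (τ' x).val = g (τ x.val) := by
      intro x; rfl
    calc ∑ x : {p : Fin n × Fin n // ¬ p.1 = p.2}, f x.val * g (τ x.val)
        = ∑ x : {p : Fin n × Fin n // ¬ p.1 = p.2}, f x.val * g (τ' x).val := by
          apply Finset.sum_congr rfl; intro x _; rw [hcomp]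
      _ ≤ _ := this
  -- now expand the Frobenius norms
  unfold frob
  apply Real.sqrt_le_sqrt
  have hpt : ∀ M : Matrix (Fin n) (Fin n) ℝ,
      ∑ i, ∑ j, (M i j) ^ 2 = ∑ p : Fin n × Fin n, (M p.1 p.2) ^ 2 := by
    intro M
    exact (Fintype.sum_prod_type (f := fun p : Fin n × Fin n => (M p.1 p.2) ^ 2)).symm
  have lhs_eq : ∑ i, ∑ j, ((toep n θ₁ - toep n θ₂) i j) ^ 2
      = ∑ p : Fin n × Fin n, (f p - g p) ^ 2 := by
    rw [hpt]
    apply Finset.sum_congr rfl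
    intro p _
    simp [toep, hf, hg, d, Matrix.sub_apply]
  have rhs_eq : ∑ i, ∑ j, (((toep n θ₁).submatrix π₁ π₁ - (toep n θ₂).submatrix π₂ π₂) i j) ^ 2
      = ∑ p : Fin n × Fin n, (f p - g (τ p)) ^ 2 := by
    rw [hpt]
    rw [← Equiv.sum_comp (π₁.symm.prodCongr π₁.symm)
      (fun p : Fin n × Fin n =>
        (((toep n θ₁).submatrix π₁ π₁ - (toep n θ₂).submatrix π₂ π₂) p.1 p.2) ^ 2)]
    apply Finset.sum_congr rfl
    intro p _
    simp only [Equiv.prodCongr_apply, Matrix.sub_apply, Matrix.submatrix_apply, Prod.map]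
    simp [toep, hf, hg, d, hτ, hσ, Equiv.prodCongr_apply]
  rw [lhs_eq, rhs_eq]
  have expand : ∀ (h : Fin n × Fin n → ℝ),
      ∑ p : Fin n × Fin n, (f p - h p) ^ 2
        = ∑ p : Fin n × Fin n, f p ^ 2 - 2 * ∑ p : Fin n × Fin n, f p * h p
          + ∑ p : Fin n × Fin n, h p ^ 2 := by
    intro h
    simp only [sub_sq]
    rw [Finset.sum_add_distrib, Finset.sum_sub_distrib, Finset.mul_sum]
    simp only [mul_assoc]
  have hgτ : ∑ p : Fin n × Fin n, g (τ p) ^ 2 = ∑ p : Fin n × Fin n, g p ^ 2 :=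
    Equiv.sum_comp τ (fun p => g p ^ 2)
  rw [expand g, expand (fun p => g (τ p))]
  simp only [hgτ]
  linarith
end

section
/- Let Θ, Θ̂ be symmetric monotone Toeplitz matrices and Π, Π̂ permutation matrices in a subset S'. Then ‖Π̂ Θ Π̂ᵀ − Π Θ Πᵀ‖_F ≤ 2·‖Π̂ Θ̂ Π̂ᵀ − Π Θ Πᵀ‖_F. -/
open Finset

namespace Stmt5Aux


def dd {n : ℕ} (i j : Fin n) : ℕ := (((i : ℤ) - (j : ℤ))).natAbs
def S (n : ℕ) : Finset (Fin n × Fin n) := Finset.univ.filter (fun p => p.1 ≠ p.2)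

lemma dd_pos {n : ℕ} {i j : Fin n} (h : i ≠ j) : 1 ≤ dd i j := by
  have : (i : ℤ) ≠ (j : ℤ) := by exact_mod_cast fun hh => h (Fin.ext (by exact_mod_cast hh))
  simp [dd]; omega

lemma dd_le {n : ℕ} (i j : Fin n) : dd i j ≤ n - 1 := by
  have h1 := i.isLt; have h2 := j.isLt
  simp [dd]; omega

lemma tele (f : ℕ → ℝ) (a b : ℕ) (h : a ≤ b) :
    ∑ j ∈ Finset.Ico a b, (f j - f (j + 1)) = f a - f b := by
  induction b, h using Nat.le_induction with
  | base => simp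
  | succ b hb ih => rw [Finset.sum_Ico_succ_top hb, ih]; ring

lemma rep (θ : ℕ → ℝ) (n m : ℕ) (hm : 1 ≤ m) (hm' : m ≤ n - 1) :
    θ m = θ (n - 1) + ∑ j ∈ Finset.Ico 1 (n - 1), (θ j - θ (j + 1)) * (if m ≤ j then 1 else 0) := by
  have hfil : (Finset.Ico 1 (n - 1)).filter (fun j => m ≤ j) = Finset.Ico m (n - 1) := by
    ext x; simp [Finset.mem_filter, Finset.mem_Ico]; omega
  have : ∀ j, (θ j - θ (j + 1)) * (if m ≤ j then (1:ℝ) else 0) = if m ≤ j then θ j - θ (j+1) else 0 := by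
    intro j; by_cases h : m ≤ j <;> simp [h]
  simp_rw [this]
  rw [← Finset.sum_filter, hfil, tele θ m (n - 1) hm']
  ring

lemma sum_perm {n : ℕ} (σ : Equiv.Perm (Fin n)) (g : Fin n × Fin n → ℝ) :
    ∑ p ∈ S n, g (σ p.1, σ p.2) = ∑ p ∈ S n, g p := by
  apply Finset.sum_equiv (Equiv.prodCongr σ σ)
  · intro p; simp [S, σ.injective.ne_iff]
  · intro p _; rfl

lemma sum_perm_univ {n : ℕ} (σ : Equiv.Perm (Fin n)) (g : Fin n × Fin n → ℝ) :
    ∑ p : Fin n × Fin n, g (σ p.1, σ p.2) = ∑ p : Fin n × Fin n, g p :=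
  Equiv.sum_comp (Equiv.prodCongr σ σ) g

lemma count {n : ℕ} (σ : Equiv.Perm (Fin n)) (j k : ℕ) :
    ∑ p ∈ S n, (if dd (σ p.1) (σ p.2) ≤ j then (1:ℝ) else 0) * (if dd p.1 p.2 ≤ k then (1:ℝ) else 0)
      ≤ ∑ p ∈ S n, (if dd p.1 p.2 ≤ j then (1:ℝ) else 0) * (if dd p.1 p.2 ≤ k then (1:ℝ) else 0) := by
  rcases le_total j k with hjk | hkj
  · have hrhs : ∑ p ∈ S n, (if dd p.1 p.2 ≤ j then (1:ℝ) else 0) * (if dd p.1 p.2 ≤ k then (1:ℝ) else 0)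
        = ∑ p ∈ S n, (if dd p.1 p.2 ≤ j then (1:ℝ) else 0) := by
      refine Finset.sum_congr rfl fun p _ => ?_
      by_cases h : dd p.1 p.2 ≤ j
      · simp [h, le_trans h hjk]
      · simp [h]
    rw [hrhs, ← sum_perm σ (fun p => if dd p.1 p.2 ≤ j then (1:ℝ) else 0)]
    refine Finset.sum_le_sum fun p _ => ?_
    by_cases h : dd (σ p.1) (σ p.2) ≤ j <;> by_cases h' : dd p.1 p.2 ≤ k <;> simp [h, h']
  · have hrhs : ∑ p ∈ S n, (if dd p.1 p.2 ≤ j then (1:ℝ) else 0) * (if dd p.1 p.2 ≤ k then (1:ℝ) else 0)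
        = ∑ p ∈ S n, (if dd p.1 p.2 ≤ k then (1:ℝ) else 0) := by
      refine Finset.sum_congr rfl fun p _ => ?_
      by_cases h : dd p.1 p.2 ≤ k
      · simp [h, le_trans h hkj]
      · simp [h]
    rw [hrhs]
    refine Finset.sum_le_sum fun p _ => ?_
    by_cases h : dd (σ p.1) (σ p.2) ≤ j <;> by_cases h' : dd p.1 p.2 ≤ k <;> simp [h, h']

/-- the key cross-term inequality, off-diagonal part -/
lemma cross {n : ℕ} (θ θh : ℕ → ℝ)
    (h1 : ∀ k, 1 ≤ k → k + 1 ≤ n - 1 → θ (k + 1) ≤ θ k)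
    (h2 : ∀ k, 1 ≤ k → k + 1 ≤ n - 1 → θh (k + 1) ≤ θh k)
    (σ : Equiv.Perm (Fin n)) :
    ∑ p ∈ S n, θh (dd (σ p.1) (σ p.2)) * θ (dd p.1 p.2)
      ≤ ∑ p ∈ S n, θh (dd p.1 p.2) * θ (dd p.1 p.2) := by
  classical
  set K := Finset.Ico 1 (n - 1) with hK
  set c := θ (n - 1)
  set ch := θh (n - 1)
  set A : Fin n × Fin n → ℝ :=
    fun p => ∑ k ∈ K, (θ k - θ (k + 1)) * (if dd p.1 p.2 ≤ k then 1 else 0) with hA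
  set Ah : Fin n × Fin n → ℝ :=
    fun p => ∑ j ∈ K, (θh j - θh (j + 1)) * (if dd p.1 p.2 ≤ j then 1 else 0) with hAh
  have hrepθ : ∀ p ∈ S n, θ (dd p.1 p.2) = c + A p := by
    intro p hp
    have hne : p.1 ≠ p.2 := (Finset.mem_filter.mp hp).2
    exact rep θ n _ (dd_pos hne) (dd_le _ _)
  have hrepθh : ∀ i j : Fin n, i ≠ j → θh (dd i j) = ch + Ah (i, j) := by
    intro i j hne
    exact rep θh n _ (dd_pos hne) (dd_le _ _)
  have expand : ∀ τ : Equiv.Perm (Fin n),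
      ∑ p ∈ S n, θh (dd (τ p.1) (τ p.2)) * θ (dd p.1 p.2)
        = ∑ p ∈ S n, (ch * c + ch * A p + c * Ah (τ p.1, τ p.2) + Ah (τ p.1, τ p.2) * A p) := by
    intro τ
    refine Finset.sum_congr rfl fun p hp => ?_
    have hne : p.1 ≠ p.2 := (Finset.mem_filter.mp hp).2
    rw [hrepθ p hp, hrepθh _ _ (fun h => hne (τ.injective h))]
    ring
  have expand1 := expand 1
  simp only [Equiv.Perm.coe_one, id_eq, Prod.mk.eta] at expand1
  rw [expand σ, expand1]
  simp only [Finset.sum_add_distrib]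
  have e1 : ∑ p ∈ S n, c * Ah (σ p.1, σ p.2) = ∑ p ∈ S n, c * Ah p := by
    simpa using sum_perm σ (fun p => c * Ah p)
  rw [e1]
  apply add_le_add_right
  -- main bit: compare the quadratic terms
  have key : ∀ τ : Equiv.Perm (Fin n),
      ∑ p ∈ S n, Ah (τ p.1, τ p.2) * A p
        = ∑ j ∈ K, ∑ k ∈ K, ((θh j - θh (j + 1)) * (θ k - θ (k + 1))) *
            ∑ p ∈ S n, (if dd (τ p.1) (τ p.2) ≤ j then (1:ℝ) else 0) *
              (if dd p.1 p.2 ≤ k then (1:ℝ) else 0) := by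
    intro τ
    have step1 : ∑ p ∈ S n, Ah (τ p.1, τ p.2) * A p
        = ∑ p ∈ S n, ∑ j ∈ K, ∑ k ∈ K,
            ((θh j - θh (j + 1)) * (if dd (τ p.1) (τ p.2) ≤ j then (1:ℝ) else 0)) *
            ((θ k - θ (k + 1)) * (if dd p.1 p.2 ≤ k then (1:ℝ) else 0)) := by
      refine Finset.sum_congr rfl fun p _ => ?_
      rw [hAh, hA, Finset.sum_mul_sum]
    rw [step1, Finset.sum_comm]
    refine Finset.sum_congr rfl fun j _ => ?_
    rw [Finset.sum_comm]
    refine Finset.sum_congr rfl fun k _ => ?_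
    rw [Finset.mul_sum]
    refine Finset.sum_congr rfl fun p _ => ?_
    ring
  have key1 := key 1
  simp only [Equiv.Perm.coe_one, id_eq, Prod.mk.eta] at key1
  rw [key σ, key1]
  refine Finset.sum_le_sum fun j hj => Finset.sum_le_sum fun k hk => ?_
  have hj' : 1 ≤ j ∧ j < n - 1 := Finset.mem_Ico.mp hj
  have hk' : 1 ≤ k ∧ k < n - 1 := Finset.mem_Ico.mp hk
  have hΔh : (0:ℝ) ≤ θh j - θh (j + 1) := by
    have := h2 j hj'.1 (by omega); linarith
  have hΔ : (0:ℝ) ≤ θ k - θ (k + 1) := by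
    have := h1 k hk'.1 (by omega); linarith
  refine mul_le_mul_of_nonneg_left ?_ (mul_nonneg hΔh hΔ)
  exact count σ j k

lemma cross_univ {n : ℕ} (θ θh : ℕ → ℝ)
    (h1 : ∀ k, 1 ≤ k → k + 1 ≤ n - 1 → θ (k + 1) ≤ θ k)
    (h2 : ∀ k, 1 ≤ k → k + 1 ≤ n - 1 → θh (k + 1) ≤ θh k)
    (σ : Equiv.Perm (Fin n)) :
    ∑ p : Fin n × Fin n, θh (dd (σ p.1) (σ p.2)) * θ (dd p.1 p.2)
      ≤ ∑ p : Fin n × Fin n, θh (dd p.1 p.2) * θ (dd p.1 p.2) := by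
  have split : ∀ f : Fin n × Fin n → ℝ,
      ∑ p : Fin n × Fin n, f p
        = ∑ p ∈ S n, f p + ∑ p ∈ Finset.univ.filter (fun p : Fin n × Fin n => ¬ p.1 ≠ p.2), f p :=
    fun f => (Finset.sum_filter_add_sum_filter_not Finset.univ _ f).symm
  rw [split, split]
  have hdiag : ∑ p ∈ Finset.univ.filter (fun p : Fin n × Fin n => ¬ p.1 ≠ p.2),
        θh (dd (σ p.1) (σ p.2)) * θ (dd p.1 p.2)
      = ∑ p ∈ Finset.univ.filter (fun p : Fin n × Fin n => ¬ p.1 ≠ p.2),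
        θh (dd p.1 p.2) * θ (dd p.1 p.2) := by
    refine Finset.sum_congr rfl fun p hp => ?_
    have h : p.1 = p.2 := by
      have := (Finset.mem_filter.mp hp).2
      simpa using this
    rw [h]; simp [dd]
  rw [hdiag]
  exact add_le_add_left (cross θ θh h1 h2 σ) _

lemma core {n : ℕ} (θ θh : ℕ → ℝ)
    (h1 : ∀ k, 1 ≤ k → k + 1 ≤ n - 1 → θ (k + 1) ≤ θ k)
    (h2 : ∀ k, 1 ≤ k → k + 1 ≤ n - 1 → θh (k + 1) ≤ θh k)
    (σ : Equiv.Perm (Fin n)) :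
    ∑ p : Fin n × Fin n, (θh (dd p.1 p.2) - θ (dd p.1 p.2)) ^ 2
      ≤ ∑ p : Fin n × Fin n, (θh (dd (σ p.1) (σ p.2)) - θ (dd p.1 p.2)) ^ 2 := by
  have hsq : ∑ p : Fin n × Fin n, θh (dd (σ p.1) (σ p.2)) ^ 2
      = ∑ p : Fin n × Fin n, θh (dd p.1 p.2) ^ 2 :=
    sum_perm_univ σ (fun p => θh (dd p.1 p.2) ^ 2)
  have hc := cross_univ θ θh h1 h2 σ
  have e : ∀ (a b : ℝ), (a - b) ^ 2 = a ^ 2 - 2 * (a * b) + b ^ 2 := fun a b => by ring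
  simp only [e, Finset.sum_add_distrib, Finset.sum_sub_distrib, ← Finset.mul_sum]
  linarith


lemma frob_eq' {n : ℕ} (A : Matrix (Fin n) (Fin n) ℝ) :
    frob A = Real.sqrt (∑ p : Fin n × Fin n, (A p.1 p.2) ^ 2) := by
  rw [frob, Fintype.sum_prod_type]

noncomputable def vec {n : ℕ} (A : Matrix (Fin n) (Fin n) ℝ) :
    EuclideanSpace ℝ (Fin n × Fin n) := WithLp.toLp 2 (fun p => A p.1 p.2)

lemma frob_norm {n : ℕ} (A : Matrix (Fin n) (Fin n) ℝ) : frob A = ‖vec A‖ := by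
  rw [frob_eq', EuclideanSpace.norm_eq]
  congr 1
  exact Finset.sum_congr rfl fun p _ => by simp [vec, sq_abs]

lemma vec_sub {n : ℕ} (A B : Matrix (Fin n) (Fin n) ℝ) : vec (A - B) = vec A - vec B := rfl

lemma frob_tri {n : ℕ} (A B C : Matrix (Fin n) (Fin n) ℝ) :
    frob (A - B) ≤ frob (A - C) + frob (C - B) := by
  rw [frob_norm, frob_norm, frob_norm, vec_sub, vec_sub, vec_sub]
  exact norm_sub_le_norm_sub_add_norm_sub _ _ _

lemma frob_rev {n : ℕ} (A B : Matrix (Fin n) (Fin n) ℝ) : frob (A - B) = frob (B - A) := by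
  rw [frob_norm, frob_norm, vec_sub, vec_sub, norm_sub_rev]

lemma frob_submatrix {n : ℕ} (M : Matrix (Fin n) (Fin n) ℝ) (σ : Equiv.Perm (Fin n)) :
    frob (M.submatrix σ σ) = frob M := by
  rw [frob_eq', frob_eq']
  congr 1
  exact sum_perm_univ σ (fun p => (M p.1 p.2) ^ 2)

/-- key inequality: `‖Θ̂ − Θ‖_F ≤ ‖Π̂ Θ̂ Π̂ᵀ − Π Θ Πᵀ‖_F` -/
lemma keyM {n : ℕ} (θ θh : ℕ → ℝ)
    (h1 : ∀ k, 1 ≤ k → k + 1 ≤ n - 1 → θ (k + 1) ≤ θ k)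
    (h2 : ∀ k, 1 ≤ k → k + 1 ≤ n - 1 → θh (k + 1) ≤ θh k)
    (π πh : Equiv.Perm (Fin n)) :
    frob (toep n θh - toep n θ) ≤
      frob ((toep n θh).submatrix πh πh - (toep n θ).submatrix π π) := by
  rw [frob_eq', frob_eq']
  apply Real.sqrt_le_sqrt
  have hent : ∀ p : Fin n × Fin n,
      ((toep n θh).submatrix πh πh - (toep n θ).submatrix π π) p.1 p.2
        = θh (dd (πh p.1) (πh p.2)) - θ (dd (π p.1) (π p.2)) := fun p => rfl
  have hent2 : ∀ p : Fin n × Fin n,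
      (toep n θh - toep n θ) p.1 p.2 = θh (dd p.1 p.2) - θ (dd p.1 p.2) := fun p => rfl
  simp only [hent, hent2]
  have reidx := sum_perm_univ π
      (fun p => (θh (dd ((π.symm.trans πh) p.1) ((π.symm.trans πh) p.2)) - θ (dd p.1 p.2)) ^ 2)
  simp only [Equiv.trans_apply, Equiv.symm_apply_apply] at reidx
  rw [reidx]
  have := core θ θh h1 h2 (π.symm.trans πh)
  simpa only [Equiv.trans_apply] using this

end Stmt5Aux

/-- For symmetric monotone Toeplitz matrices `Θ`, `Θ̂` and permutations `Π`, `Π̂`,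
`‖Π̂ Θ Π̂ᵀ − Π Θ Πᵀ‖_F ≤ 2 ‖Π̂ Θ̂ Π̂ᵀ − Π Θ Πᵀ‖_F`. -/
theorem stmt5 (n : ℕ) (θ θh : ℕ → ℝ)
    (h1 : ∀ k, 1 ≤ k → k + 1 ≤ n - 1 → θ (k + 1) ≤ θ k)
    (h2 : ∀ k, 1 ≤ k → k + 1 ≤ n - 1 → θh (k + 1) ≤ θh k)
    (π πh : Equiv.Perm (Fin n)) :
    frob ((toep n θ).submatrix πh πh - (toep n θ).submatrix π π) ≤
      2 * frob ((toep n θh).submatrix πh πh - (toep n θ).submatrix π π) := by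
  have tri := Stmt5Aux.frob_tri ((toep n θ).submatrix πh πh) ((toep n θ).submatrix π π)
      ((toep n θh).submatrix πh πh)
  have hsub : (toep n θ).submatrix πh πh - (toep n θh).submatrix πh πh
      = (toep n θ - toep n θh).submatrix πh πh := by
    ext i j; simp [Matrix.submatrix_apply, Matrix.sub_apply]
  have h3 : frob ((toep n θ).submatrix πh πh - (toep n θh).submatrix πh πh)
      = frob (toep n θh - toep n θ) := by
    rw [hsub, Stmt5Aux.frob_submatrix, Stmt5Aux.frob_rev]
  have h5 := Stmt5Aux.keyM θ θh h1 h2 π πh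
  linarith
end
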